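/- arXiv:1302.0454 — 4 statements merged into one kernel-verified Lean document; each statement's English description precedes it below -/
import Mathlib

section
/- Every left-c.e. set Z is a g-change set for some function g : ℕ → ℕ with g = o(2^n), i.e. lim_{n→∞} g(n)/2^n = 0. -/
/-! Basic definitions: Cantor space, initial segments, computable approximations,
Martin-Löf randomness, change counting, cost functions, oracle computability. -/

/-- The length-`n` initial segment of `Z : ℕ → Bool`, as a list of booleans. -/
def restr (Z : ℕ → Bool) (n : ℕ) : List Bool := (List.range n).map Z

/-- `σ` is an initial segment of `Z`. -/
def InitSeg (σ : List Bool) (Z : ℕ → Bool) : Prop := σ = restr Z σ.length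

/-- `Z` is Martin-Löf random: for every computable sequence of strings with
finite total measure, only finitely many are initial segments of `Z`. -/
def MLRandom (Z : ℕ → Bool) : Prop :=
  ∀ σ : ℕ → List Bool, Computable σ →
    Summable (fun i => ((1 : ℝ) / 2) ^ (σ i).length) →
    {i | InitSeg (σ i) Z}.Finite

/-- `(Zs s) s∈ℕ` converges pointwise to `Z`. -/
def Approx (Zs : ℕ → ℕ → Bool) (Z : ℕ → Bool) : Prop :=
  ∀ x, ∃ t, ∀ s, t ≤ s → Zs s x = Z x

/-- `Zs` is a computable approximation of `Z`. -/
def CompApprox (Zs : ℕ → ℕ → Bool) (Z : ℕ → Bool) : Prop :=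
  Computable₂ Zs ∧ Approx Zs Z

/-- `Z` is Δ⁰₂: it has a computable approximation. -/
def Delta02 (Z : ℕ → Bool) : Prop := ∃ Zs, CompApprox Zs Z

/-- The set of stages `s ≥ 1` at which the length-`n` initial segment of the
approximation changes. -/
def changeStages (Zs : ℕ → ℕ → Bool) (n : ℕ) : Set ℕ :=
  {s | 1 ≤ s ∧ restr (Zs s) n ≠ restr (Zs (s - 1)) n}

/-- `Z` is a `g`-change set. -/
def GChangeSet (Z : ℕ → Bool) (g : ℕ → ℕ) : Prop :=
  ∃ Zs, CompApprox Zs Z ∧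
    ∀ n, (changeStages Zs n).Finite ∧ (changeStages Zs n).ncard ≤ g n

/-- `Z` is ω-c.a.: a `g`-change set for some computable `g`. -/
def OmegaCA (Z : ℕ → Bool) : Prop := ∃ g : ℕ → ℕ, Computable g ∧ GChangeSet Z g

/-- Lexicographic order on Cantor space. -/
def LexLE (X Y : ℕ → Bool) : Prop :=
  X = Y ∨ ∃ n, (∀ i, i < n → X i = Y i) ∧ X n = false ∧ Y n = true

/-- `Z` is left-c.e. -/
def LeftCE (Z : ℕ → Bool) : Prop :=
  ∃ Zs, CompApprox Zs Z ∧ ∀ s, LexLE (Zs s) (Zs (s + 1))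

/-- `c` is a cost function: computable, nonnegative, nondecreasing in the stage,
nonincreasing in the number. -/
def CostFunction (c : ℕ → ℕ → ℚ) : Prop :=
  Computable₂ c ∧ (∀ x s, 0 ≤ c x s) ∧
    (∀ x s t, s ≤ t → c x s ≤ c x t) ∧ (∀ x y s, x ≤ y → c y s ≤ c x s)

/-- The limit condition for a cost function. -/
def LimitCondition (c : ℕ → ℕ → ℚ) : Prop :=
  ∀ ε : ℚ, 0 < ε → ∃ x₀, ∀ x, x₀ ≤ x → ∀ s, c x s ≤ ε

/-- A benign cost function: the number of pairwise disjoint intervals `[x,s)` with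
`c x s ≥ 2^{-k}` is computably bounded in `k`. -/
def Benign (c : ℕ → ℕ → ℚ) : Prop :=
  ∃ b : ℕ → ℕ, Computable b ∧
    ∀ k m (x s : ℕ → ℕ), (∀ i, i < m → x i < s i) →
      (∀ i, i + 1 < m → s i ≤ x (i + 1)) →
      (∀ i, i < m → ((1 : ℚ) / 2) ^ k ≤ c (x i) (s i)) → m ≤ b k

open Classical in
/-- The cost paid at stage `s` by the approximation `As`: if `s ≥ 1` and the
approximation changes at `s`, it is `c x s` where `x` is the least changed number. -/
noncomputable def stageCost (c : ℕ → ℕ → ℚ) (As : ℕ → ℕ → Bool) (s : ℕ) : ℚ :=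
  if s = 0 then 0
  else if h : ∃ x, As s x ≠ As (s - 1) x then c (Nat.find h) s else 0

/-- `A` obeys the cost function `c`: some computable approximation of `A` has
finite total cost. -/
def Obeys (A : ℕ → Bool) (c : ℕ → ℕ → ℚ) : Prop :=
  ∃ As, CompApprox As A ∧ ∃ B : ℚ, ∀ F : Finset ℕ, ∑ s ∈ F, stageCost c As s ≤ B

/-- Functions partial recursive in the oracle `O`. -/
inductive RecIn (O : ℕ →. ℕ) : (ℕ →. ℕ) → Prop
  | oracle : RecIn O O
  | zero : RecIn O (pure 0)
  | succ : RecIn O ↑Nat.succ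
  | left : RecIn O ↑fun n : ℕ => n.unpair.1
  | right : RecIn O ↑fun n : ℕ => n.unpair.2
  | pair {f g} : RecIn O f → RecIn O g → RecIn O fun n => Nat.pair <$> f n <*> g n
  | comp {f g} : RecIn O f → RecIn O g → RecIn O fun n => g n >>= f
  | prec {f g} : RecIn O f → RecIn O g → RecIn O (Nat.unpaired fun a n =>
      n.rec (f a) fun y IH => do let i ← IH; g (Nat.pair a (Nat.pair y i)))
  | rfind {f} : RecIn O f → RecIn O fun a =>
      Nat.rfind fun n => (fun m => m = 0) <$> f (Nat.pair a n)

/-- The characteristic function of `A` as a partial function ℕ →. ℕ. -/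
def charFn (A : ℕ → Bool) : ℕ →. ℕ := fun n => Part.some (cond (A n) 1 0)

/-- Turing reducibility: `A ≤_T Z`. -/
def TuringLE (A Z : ℕ → Bool) : Prop := RecIn (charFn Z) (charFn A)

/-- `A` is computably enumerable: the domain of a partial computable function. -/
def CE (A : ℕ → Bool) : Prop :=
  ∃ f : ℕ →. ℕ, Nat.Partrec f ∧ ∀ x, A x = true ↔ (f x).Dom

/-- A Π⁰₁ class of elements of Cantor space. -/
def Pi01 (P : Set (ℕ → Bool)) : Prop :=
  ∃ f : ℕ → Option (List Bool), Computable f ∧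
    P = {Z | ∀ i σ, f i = some σ → ¬ InitSeg σ Z}

/-- The c.e. set `W_e`: the domain of the `e`-th partial computable function. -/
def Wset (e : ℕ) : Set ℕ :=
  {x | ((Denumerable.ofNat Nat.Partrec.Code e).eval x).Dom}

/-- The stage-`s` approximation to `W_e`, via step-bounded evaluation. -/
def WAt (e s x : ℕ) : Prop :=
  (Nat.Partrec.Code.evaln s (Denumerable.ofNat Nat.Partrec.Code e) x).isSome

/-- `A` is promptly simple. -/
def PromptlySimple (A : ℕ → Bool) : Prop :=
  CE A ∧ {x | A x = false}.Infinite ∧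
    ∃ As : ℕ → ℕ → Bool, Computable₂ As ∧
      (∀ s x, As s x = true → As (s + 1) x = true) ∧
      (∀ x, A x = true ↔ ∃ s, As s x = true) ∧
      ∀ e, (Wset e).Infinite →
        ∃ s x, 1 ≤ s ∧ WAt e s x ∧ ¬ WAt e (s - 1) x ∧ As s x = true

namespace LCEaux


def val (X : ℕ → Bool) : ℕ → ℕ
  | 0 => 0
  | n+1 => 2 * val X n + (X n).toNat

lemma val_congr {X Y : ℕ → Bool} : ∀ {n}, (∀ i < n, X i = Y i) → val X n = val Y n := by
  intro n
  induction n with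
  | zero => intro _; rfl
  | succ n ih =>
    intro h
    simp only [val, ih (fun i hi => h i (hi.trans n.lt_succ_self)), h n n.lt_succ_self]

lemma val_inj {X Y : ℕ → Bool} : ∀ {n}, val X n = val Y n → ∀ i < n, X i = Y i := by
  intro n
  induction n with
  | zero => intro _ i hi; omega
  | succ n ih =>
    intro h i hi
    have hb : (X n).toNat ≤ 1 := Bool.toNat_le _
    have hb' : (Y n).toNat ≤ 1 := Bool.toNat_le _
    simp only [val] at h
    have h1 : val X n = val Y n := by omega
    have h2 : (X n).toNat = (Y n).toNat := by omega
    rcases Nat.lt_succ_iff_lt_or_eq.1 hi with h' | h'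
    · exact ih h1 i h'
    · subst h'
      cases hx : X i <;> cases hy : Y i <;> simp_all


lemma restr_eq_iff {X Y : ℕ → Bool} {n : ℕ} :
    restr X n = restr Y n ↔ ∀ i < n, X i = Y i := by
  simp [restr, List.map_inj_left, List.mem_range]

lemma val_mul_le {X : ℕ → Bool} {m : ℕ} : ∀ {n}, m ≤ n → val X m * 2 ^ (n - m) ≤ val X n := by
  intro n
  induction n with
  | zero => intro h; interval_cases m; simp [val]
  | succ n ih =>
    intro h
    rcases Nat.lt_succ_iff_lt_or_eq.1 (Nat.lt_succ_of_le h) with h' | h'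
    · have hm : m ≤ n := by omega
      have := ih hm
      have hpow : n + 1 - m = (n - m) + 1 := by omega
      simp only [val, hpow, pow_succ]
      nlinarith [Bool.toNat_le (X n)]
    · subst h'; simp

lemma val_lt_add {X : ℕ → Bool} {m : ℕ} : ∀ {n}, m ≤ n → val X n < (val X m + 1) * 2 ^ (n - m) := by
  intro n
  induction n with
  | zero => intro h; interval_cases m; simp [val]
  | succ n ih =>
    intro h
    rcases Nat.lt_succ_iff_lt_or_eq.1 (Nat.lt_succ_of_le h) with h' | h'
    · have hm : m ≤ n := by omega
      have := ih hm
      have hpow : n + 1 - m = (n - m) + 1 := by omega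
      simp only [val, hpow, pow_succ]
      nlinarith [Bool.toNat_le (X n)]
    · subst h'; simp

lemma val_lt {X : ℕ → Bool} (n : ℕ) : val X n < 2 ^ n := by
  have := val_lt_add (X := X) (m := 0) (n := n) (Nat.zero_le n)
  simpa [val] using this


lemma lex_val_le {X Y : ℕ → Bool} (h : LexLE X Y) (n : ℕ) : val X n ≤ val Y n := by
  rcases h with h | ⟨p, hag, hX, hY⟩
  · subst h; exact le_rfl
  · have key : ∀ n, (n ≤ p → val X n = val Y n) ∧ (p < n → val X n < val Y n) := by
      intro n
      induction n with
      | zero => exact ⟨fun _ => rfl, fun h => absurd h (Nat.not_lt_zero p)⟩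
      | succ n ih =>
        constructor
        · intro h
          exact val_congr (fun i hi => hag i (by omega))
        · intro h
          rcases Nat.lt_succ_iff_lt_or_eq.1 h with h' | h'
          · have := ih.2 h'
            simp only [val]
            have := Bool.toNat_le (X n)
            have := Bool.toNat_le (Y n)
            omega
          · subst h'
            have heq : val X p = val Y p := ih.1 le_rfl
            simp only [val, hX, hY, Bool.toNat_false, Bool.toNat_true]
            omega
    rcases le_or_gt n p with h | h
    · exact (key n).1 h |>.le
    · exact ((key n).2 h).le

def trunc (X : ℕ → Bool) (k : ℕ) : ℕ → Bool := fun x => cond (decide (x < k)) (X x) false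

lemma val_trunc (X : ℕ → Bool) (k : ℕ) : ∀ n, val (trunc X k) n = val X (min k n) * 2 ^ (n - min k n) := by
  intro n
  induction n with
  | zero => simp [val]
  | succ n ih =>
    rcases lt_or_ge n k with h | h
    · have h1 : min k n = n := by omega
      have h2 : min k (n+1) = n + 1 := by omega
      simp only [val, ih, h1, h2, trunc, Nat.sub_self, pow_zero, mul_one, decide_eq_true h, cond_true]
    · have h1 : min k n = k := by omega
      have h2 : min k (n+1) = k := by omega
      have h3 : trunc X k n = false := by simp [trunc, Nat.not_lt.2 h]
      simp only [val, ih, h1, h2, h3, Bool.toNat_false, Nat.add_zero]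
      have : n + 1 - k = (n - k) + 1 := by omega
      rw [this, pow_succ]; ring

lemma val_sub_lt {X Y : ℕ → Bool} {m n : ℕ} (hmn : m ≤ n) (hag : ∀ i < m, X i = Y i) :
    val Y n < val X n + 2 ^ (n - m) := by
  have h1 : val Y n < (val Y m + 1) * 2 ^ (n - m) := val_lt_add hmn
  have h2 : val X m * 2 ^ (n - m) ≤ val X n := val_mul_le hmn
  have h3 : val Y m = val X m := val_congr (fun i hi => (hag i hi).symm)
  nlinarith [pow_pos (by norm_num : 0 < 2) (n - m)]

lemma approx_prefix {Zs : ℕ → ℕ → Bool} {Z : ℕ → Bool} (h : Approx Zs Z) (m : ℕ) :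
    ∃ T, ∀ s, T ≤ s → ∀ i < m, Zs s i = Z i := by
  induction m with
  | zero => exact ⟨0, fun s _ i hi => absurd hi (Nat.not_lt_zero i)⟩
  | succ m ih =>
    obtain ⟨T, hT⟩ := ih
    obtain ⟨t, ht⟩ := h m
    refine ⟨max T t, fun s hs i hi => ?_⟩
    rcases Nat.lt_succ_iff_lt_or_eq.1 hi with h' | h'
    · exact hT s (le_trans (le_max_left _ _) hs) i h'
    · subst h'; exact ht s (le_trans (le_max_right _ _) hs)

lemma count_changes (f : ℕ → ℕ) (hmono : Monotone f) (T a : ℕ) (ha : a ≤ T)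
    (hstab : ∀ s, T ≤ s → f s = f T) :
    {s | 1 ≤ s ∧ f s ≠ f (s-1)}.Finite ∧
    {s | 1 ≤ s ∧ f s ≠ f (s-1)}.ncard ≤ a + (f T - f a) := by
  classical
  set S : Set ℕ := {s | 1 ≤ s ∧ f s ≠ f (s-1)} with hS
  set C : Finset ℕ := (Finset.Icc 1 T).filter (fun s => f s ≠ f (s-1)) with hC
  have hsub : S ⊆ ↑C := by
    intro s hs
    obtain ⟨h1, h2⟩ := hs
    simp only [hC, Finset.coe_filter, Finset.mem_Icc, Set.mem_setOf_eq]
    refine ⟨⟨h1, ?_⟩, h2⟩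
    by_contra h
    push_neg at h
    exact h2 ((hstab s (le_of_lt h)).trans (hstab (s-1) (by omega)).symm)
  have hfin : S.Finite := Set.Finite.subset (Finset.finite_toSet C) hsub
  refine ⟨hfin, ?_⟩
  have h1 : S.ncard ≤ C.card := by
    have := Set.ncard_le_ncard hsub (Finset.finite_toSet C)
    simpa [Set.ncard_coe_finset] using this
  refine h1.trans ?_
  -- split C
  have hCsub : C ⊆ (Finset.Icc 1 a) ∪ ((Finset.Icc (a+1) T).filter (fun s => f s ≠ f (s-1))) := by
    intro s hs
    simp only [hC, Finset.mem_filter, Finset.mem_Icc] at hs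
    simp only [Finset.mem_union, Finset.mem_Icc, Finset.mem_filter]
    rcases le_or_gt s a with h | h
    · exact Or.inl ⟨hs.1.1, h⟩
    · exact Or.inr ⟨⟨by omega, hs.1.2⟩, hs.2⟩
  have h2 := Finset.card_le_card hCsub
  have h3 := Finset.card_union_le (Finset.Icc 1 a) ((Finset.Icc (a+1) T).filter (fun s => f s ≠ f (s-1)))
  have h4 : (Finset.Icc 1 a).card = a := Nat.card_Icc 1 a ▸ by omega
  have h5 : ((Finset.Icc (a+1) T).filter (fun s => f s ≠ f (s-1))).card ≤ f T - f a := by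
    have hinj : ∀ s ∈ ((Finset.Icc (a+1) T).filter (fun s => f s ≠ f (s-1))), f s ∈ Finset.Ioc (f a) (f T) := by
      intro s hs
      simp only [Finset.mem_filter, Finset.mem_Icc] at hs
      simp only [Finset.mem_Ioc]
      have hlt : f (s-1) < f s := lt_of_le_of_ne (hmono (by omega)) (Ne.symm hs.2)
      exact ⟨lt_of_le_of_lt (hmono (by omega : a ≤ s - 1)) hlt, hmono hs.1.2⟩
    have hinjOn : Set.InjOn f ↑((Finset.Icc (a+1) T).filter (fun s => f s ≠ f (s-1))) := by
      intro s hs t ht hst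
      simp only [Finset.coe_filter, Finset.mem_Icc, Set.mem_setOf_eq] at hs ht
      by_contra hne
      rcases lt_or_gt_of_ne hne with h | h
      · have : f s ≤ f (t-1) := hmono (by omega)
        have : f (t-1) < f t := lt_of_le_of_ne (hmono (by omega)) (Ne.symm ht.2)
        omega
      · have : f t ≤ f (s-1) := hmono (by omega)
        have : f (s-1) < f s := lt_of_le_of_ne (hmono (by omega)) (Ne.symm hs.2)
        omega
    have := Finset.card_le_card_of_injOn f hinj hinjOn
    simpa [Nat.card_Ioc] using this
  omega


end LCEaux

/-- Every left-c.e. set is a `g`-change set for some `g = o(2^n)`. -/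
theorem leftCE_change_bound (Z : ℕ → Bool) (hZ : LeftCE Z) :
    ∃ g : ℕ → ℕ,
      Filter.Tendsto (fun n => (g n : ℝ) / 2 ^ n) Filter.atTop (nhds 0) ∧
      GChangeSet Z g := by
  classical
  obtain ⟨Zs, ⟨hZc, hZa⟩, hlex⟩ := hZ
  set Ys : ℕ → ℕ → Bool := fun s x => LCEaux.trunc (Zs s) s x with hYs
  -- computability of Ys
  have hYcomp : Computable₂ Ys := by
    have h1 : Primrec fun p : ℕ × ℕ => decide (p.2 < p.1) :=
      (Primrec.nat_lt.comp Primrec.snd Primrec.fst).decide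
    exact Computable.cond h1.to_comp hZc (Computable.const false)
  -- Ys approximates Z
  have hYapprox : Approx Ys Z := by
    intro x
    obtain ⟨t, ht⟩ := hZa x
    refine ⟨max t (x+1), fun s hs => ?_⟩
    have hx : x < s := by omega
    simp [hYs, LCEaux.trunc, hx, ht s (by omega)]
  -- value is monotone in s
  have hmono : ∀ n, Monotone fun s => LCEaux.val (Ys s) n := by
    intro n
    apply monotone_nat_of_le_succ
    intro s
    show LCEaux.val (LCEaux.trunc (Zs s) s) n ≤ LCEaux.val (LCEaux.trunc (Zs (s+1)) (s+1)) n
    rw [LCEaux.val_trunc, LCEaux.val_trunc]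
    set a := min s n with hadef
    set b := min (s+1) n with hbdef
    have hab : a ≤ b := by omega
    have hbn : b ≤ n := min_le_right _ _
    calc LCEaux.val (Zs s) a * 2^(n-a)
        = LCEaux.val (Zs s) a * 2^(b-a) * 2^(n-b) := by
          rw [mul_assoc, ← pow_add]; congr 2; omega
      _ ≤ LCEaux.val (Zs s) b * 2^(n-b) :=
          Nat.mul_le_mul_right _ (LCEaux.val_mul_le hab)
      _ ≤ LCEaux.val (Zs (s+1)) b * 2^(n-b) :=
          Nat.mul_le_mul_right _ (LCEaux.lex_val_le (hlex s) b)
  -- change stages are value changes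
  have hsubn : ∀ n, changeStages Ys n ⊆
      {s | 1 ≤ s ∧ LCEaux.val (Ys s) n ≠ LCEaux.val (Ys (s-1)) n} := by
    intro n s hs
    refine ⟨hs.1, fun h => hs.2 ?_⟩
    exact LCEaux.restr_eq_iff.2 (LCEaux.val_inj h)
  -- stabilization of values
  have hstabT : ∀ n, ∃ T, n ≤ T ∧ ∀ s, T ≤ s → LCEaux.val (Ys s) n = LCEaux.val Z n := by
    intro n
    obtain ⟨T0, hT0⟩ := LCEaux.approx_prefix hZa n
    refine ⟨max T0 n, le_max_right _ _, fun s hs => ?_⟩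
    apply LCEaux.val_congr
    intro i hi
    have his : i < s := by omega
    simp [hYs, LCEaux.trunc, his, hT0 s (by omega) i hi]
  -- the general counting bound
  have hcount : ∀ n a, a ≤ n →
      (changeStages Ys n).Finite ∧
      (changeStages Ys n).ncard ≤ a + (LCEaux.val Z n - LCEaux.val (Ys a) n) := by
    intro n a han
    obtain ⟨T0, hT0n, hT0⟩ := hstabT n
    set T := max T0 a with hT
    have hstab : ∀ s, T ≤ s → LCEaux.val (Ys s) n = LCEaux.val (Ys T) n := by
      intro s hs
      rw [hT0 s (by omega), hT0 T (by omega)]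
    obtain ⟨hfinS, hcardS⟩ := LCEaux.count_changes (fun s => LCEaux.val (Ys s) n)
      (hmono n) T a (le_max_right _ _) hstab
    have hfin : (changeStages Ys n).Finite := hfinS.subset (hsubn n)
    refine ⟨hfin, ?_⟩
    have h1 : (changeStages Ys n).ncard ≤ _ := Set.ncard_le_ncard (hsubn n) hfinS
    refine h1.trans (hcardS.trans ?_)
    rw [hT0 T (by omega)]
  have hfin : ∀ n, (changeStages Ys n).Finite := fun n => (hcount n 0 (Nat.zero_le n)).1
  refine ⟨fun n => (changeStages Ys n).ncard, ?_, Ys, ⟨hYcomp, hYapprox⟩,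
    fun n => ⟨hfin n, le_rfl⟩⟩
  -- the o(2^n) bound
  rw [Metric.tendsto_atTop]
  intro ε hε
  obtain ⟨m, hm⟩ := exists_pow_lt_of_lt_one (half_pos hε) (by norm_num : (1:ℝ)/2 < 1)
  obtain ⟨a0, ha0⟩ := LCEaux.approx_prefix hZa m
  set a := max a0 m with hadef
  -- ℕ-level bound for n ≥ a
  have hkey : ∀ n, a ≤ n → (changeStages Ys n).ncard ≤ a + 2^(n-m) := by
    intro n hn
    have hm_le_n : m ≤ n := le_trans (le_max_right a0 m) hn
    have hag : ∀ i < m, Ys a i = Z i := by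
      intro i hi
      have hia : i < a := by omega
      simp [hYs, LCEaux.trunc, hia, ha0 a (le_max_left _ _) i hi]
    have hsub := LCEaux.val_sub_lt (X := Ys a) (Y := Z) hm_le_n hag
    have hd : LCEaux.val Z n - LCEaux.val (Ys a) n ≤ 2^(n-m) :=
      Nat.sub_le_iff_le_add.2 (Nat.le_of_lt (hsub.trans_le (Nat.add_comm _ _).le))
    exact ((hcount n a hn).2).trans (Nat.add_le_add_left hd a)
  obtain ⟨N, hN⟩ := pow_unbounded_of_one_lt ((a : ℝ)/(ε/2)) (by norm_num : (1:ℝ) < 2)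
  refine ⟨max N a, fun n hn => ?_⟩
  have hna : a ≤ n := le_trans (le_max_right N a) hn
  have hm_le_n : m ≤ n := le_trans (le_max_right a0 m) hna
  have hcast : ((changeStages Ys n).ncard : ℝ) ≤ (a : ℝ) + 2^(n-m) := by
    exact_mod_cast Nat.cast_le.2 (hkey n hna)
  have hpow2 : (0:ℝ) < 2^n := by positivity
  have h2nm : (2:ℝ)^(n-m) = 2^n * (1/2)^m := by
    have h1 : (2:ℝ)^n = 2^(n-m) * 2^m := by rw [← pow_add]; congr 1; omega
    have h2 : (2:ℝ)^m * (1/2)^m = 1 := by rw [← mul_pow]; norm_num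
    rw [h1, mul_assoc, h2, mul_one]
  have hterm1 : (a : ℝ)/2^n < ε/2 := by
    have h2 : (2:ℝ)^N ≤ 2^n := by
      apply pow_le_pow_right₀ (by norm_num) (le_trans (le_max_left N a) hn)
    have hε2 : (0:ℝ) < ε/2 := half_pos hε
    rw [div_lt_iff₀ hpow2]
    calc (a:ℝ) < (ε/2) * 2^N := by
          rw [div_lt_iff₀ hε2] at hN; linarith [hN]
      _ ≤ (ε/2) * 2^n := by nlinarith
  have : dist (((changeStages Ys n).ncard : ℝ) / 2^n) 0 = ((changeStages Ys n).ncard : ℝ) / 2^n := by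
    rw [Real.dist_eq, sub_zero, abs_of_nonneg (by positivity)]
  rw [this]
  calc ((changeStages Ys n).ncard : ℝ) / 2^n ≤ ((a:ℝ) + 2^(n-m))/2^n := by
        gcongr
    _ = (a:ℝ)/2^n + (1/2)^m := by
        rw [add_div, h2nm, mul_comm, mul_div_assoc, div_self (ne_of_gt hpow2), mul_one]
    _ < ε/2 + ε/2 := by linarith [hm]
    _ = ε := by ring
end

section
/- Define g : ℕ → ℕ by g(n) = ⌊2^n / log(log n)⌋ (natural logarithm) for n ≥ 16, and g(n) = 2^n for n < 16. Then no Martin-Löf random set is a g-change set. -/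
/-- The change bound `⌊2^n / log log n⌋` (with value `2^n` for `n < 16`). -/
noncomputable def gLogLog : ℕ → ℕ := fun n =>
  if n < 16 then 2 ^ n else ⌊(2 : ℝ) ^ n / Real.log (Real.log n)⌋₊


/-! ### Auxiliary material for STATEMENT 3 -/

/-- The rapidly growing sequence of lengths used in the test. -/
def nseq (k : ℕ) : ℕ := 3 ^ (3 ^ (2 ^ k))

theorem nat_pow_primrec' : Primrec₂ ((· ^ ·) : ℕ → ℕ → ℕ) :=
  Primrec₂.unpaired'.1 Nat.Primrec.pow

theorem nseq_primrec : Primrec nseq :=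
  nat_pow_primrec'.comp (Primrec.const 3)
    (nat_pow_primrec'.comp (Primrec.const 3) (nat_pow_primrec'.comp (Primrec.const 2) Primrec.id))

theorem restr_eq_rec (Z : ℕ → Bool) (m : ℕ) :
    restr Z m = Nat.rec [] (fun y IH => IH ++ [Z y]) m := by
  induction m with
  | zero => rfl
  | succ m ih => simp [restr, List.range_succ] at ih ⊢; rw [← ih]

theorem restr_computable {Zs : ℕ → ℕ → Bool} (hZ : Computable₂ Zs) :
    Computable₂ (fun s m => restr (Zs s) m) := by
  have : Computable (fun p : ℕ × ℕ =>
      Nat.rec (motive := fun _ => List Bool) [] (fun y IH => IH ++ [Zs p.1 y]) p.2) :=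
    Computable.nat_rec Computable.snd (Computable.const [])
      ((Computable.list_concat.comp (Computable.snd.comp Computable.snd)
        (hZ.comp (Computable.fst.comp Computable.fst)
          (Computable.fst.comp Computable.snd))).to₂)
  exact Computable₂.mk (this.of_eq fun p => (restr_eq_rec (Zs p.1) p.2).symm)

theorem replicate_eq_rec (m : ℕ) :
    List.replicate m true = Nat.rec [] (fun _ IH => true :: IH) m := by
  induction m with
  | zero => rfl
  | succ m ih => simp [List.replicate_succ, ih]

theorem replicate_computable' : Computable (fun i : ℕ => List.replicate (i + 1) true) := by
  have : Computable (fun i : ℕ =>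
      Nat.rec (motive := fun _ => List Bool) [] (fun _ IH => true :: IH) (i + 1)) :=
    Computable.nat_rec (Computable.succ.comp Computable.id) (Computable.const [])
      ((Computable.list_cons.comp (Computable.const true)
        (Computable.snd.comp Computable.snd)).to₂)
  exact this.of_eq fun i => (replicate_eq_rec (i + 1)).symm

/-- The boolean test: stage `s` is `0` or the length-`nseq k` prefix changes at `s`. -/
def testB (Zs : ℕ → ℕ → Bool) (k s : ℕ) : Bool :=
  decide (s = 0) || !decide (restr (Zs s) (nseq k) = restr (Zs (s - 1)) (nseq k))

/-- The Solovay-type test. -/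
def sigmaFn (Zs : ℕ → ℕ → Bool) (i : ℕ) : List Bool :=
  cond (testB Zs i.unpair.1 i.unpair.2)
    (restr (Zs i.unpair.2) (nseq i.unpair.1))
    (List.replicate (i + 1) true)

theorem sigmaFn_computable {Zs : ℕ → ℕ → Bool} (hZ : Computable₂ Zs) :
    Computable (sigmaFn Zs) := by
  have hu1 : Computable (fun i : ℕ => i.unpair.1) :=
    (Primrec.fst.comp Primrec.unpair).to_comp
  have hu2 : Computable (fun i : ℕ => i.unpair.2) :=
    (Primrec.snd.comp Primrec.unpair).to_comp
  have hu2' : Computable (fun i : ℕ => i.unpair.2 - 1) :=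
    (Primrec.nat_sub.comp (Primrec.snd.comp Primrec.unpair) (Primrec.const 1)).to_comp
  have hn : Computable (fun i : ℕ => nseq i.unpair.1) :=
    nseq_primrec.to_comp.comp hu1
  have hr1 : Computable (fun i : ℕ => restr (Zs i.unpair.2) (nseq i.unpair.1)) :=
    (restr_computable hZ).comp hu2 hn
  have hr2 : Computable (fun i : ℕ => restr (Zs (i.unpair.2 - 1)) (nseq i.unpair.1)) :=
    (restr_computable hZ).comp hu2' hn
  have heq : Computable (fun i : ℕ =>
      decide (restr (Zs i.unpair.2) (nseq i.unpair.1)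
        = restr (Zs (i.unpair.2 - 1)) (nseq i.unpair.1))) :=
    (Primrec.eq (α := List Bool)).decide.to_comp.comp hr1 hr2
  have hz : Computable (fun i : ℕ => decide (i.unpair.2 = 0)) :=
    (Primrec.eq (α := ℕ)).decide.to_comp.comp hu2 (Computable.const 0)
  have hnot : Computable (fun i : ℕ => !decide (restr (Zs i.unpair.2) (nseq i.unpair.1)
        = restr (Zs (i.unpair.2 - 1)) (nseq i.unpair.1))) :=
    (Primrec.dom_bool Bool.not).to_comp.comp heq
  have htest : Computable (fun i : ℕ => testB Zs i.unpair.1 i.unpair.2) :=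
    ((Primrec.dom_bool₂ Bool.or).to_comp.comp hz hnot).of_eq fun i => rfl
  exact Computable.cond htest hr1 replicate_computable'

theorem restr_length (Z : ℕ → Bool) (n : ℕ) : (restr Z n).length = n := by
  simp [restr]

theorem nseq_ge_16 (k : ℕ) : 16 ≤ nseq k := by
  have h1 : (3:ℕ) ≤ 3 ^ 2 ^ k := Nat.le_self_pow (Nat.pos_of_ne_zero (by positivity)).ne' 3
  calc (16:ℕ) ≤ 3 ^ 3 := by norm_num
  _ ≤ 3 ^ 3 ^ 2 ^ k := Nat.pow_le_pow_right (by norm_num) h1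

theorem le_nseq (k : ℕ) : k ≤ nseq k := by
  have h1 : k ≤ 2 ^ k := Nat.le_of_lt k.lt_two_pow_self
  have h2 : 2 ^ k ≤ 3 ^ 2 ^ k := Nat.le_of_lt (Nat.lt_pow_self (by norm_num))
  have h3 : 3 ^ 2 ^ k ≤ 3 ^ 3 ^ 2 ^ k :=
    Nat.pow_le_pow_right (by norm_num) (Nat.le_of_lt (Nat.lt_pow_self (by norm_num)))
  unfold nseq
  omega

theorem one_le_log_three : (1:ℝ) ≤ Real.log 3 := by
  rw [Real.le_log_iff_exp_le (by norm_num)]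
  exact le_of_lt (lt_of_lt_of_le Real.exp_one_lt_d9 (by norm_num))

theorem loglog_nseq_ge (k : ℕ) : (2:ℝ) ^ k ≤ Real.log (Real.log (nseq k)) := by
  have hcast : ((nseq k : ℕ) : ℝ) = (3:ℝ) ^ (3 ^ 2 ^ k : ℕ) := by
    unfold nseq; push_cast; ring
  have hlogn : Real.log (nseq k) = ((3 ^ 2 ^ k : ℕ) : ℝ) * Real.log 3 := by
    rw [hcast, Real.log_pow]
  have h3 : (0:ℝ) < (3:ℝ) ^ (2 ^ k : ℕ) := by positivity
  have hmid : ((3:ℝ) ^ (2 ^ k : ℕ)) ≤ Real.log (nseq k) := by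
    rw [hlogn]
    push_cast
    nlinarith [one_le_log_three, h3]
  have hlast : Real.log ((3:ℝ) ^ (2 ^ k : ℕ)) ≤ Real.log (Real.log (nseq k)) :=
    Real.log_le_log h3 hmid
  rw [Real.log_pow] at hlast
  have h2 : ((2:ℝ) ^ k) ≤ ((2 ^ k : ℕ) : ℝ) * Real.log 3 := by
    push_cast
    nlinarith [one_le_log_three, pow_pos (show (0:ℝ) < 2 by norm_num) k]
  exact le_trans h2 hlast

theorem gLogLog_nseq_le (k : ℕ) : (gLogLog (nseq k) : ℝ) ≤ 2 ^ (nseq k) / 2 ^ k := by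
  have h16 := nseq_ge_16 k
  have hLL := loglog_nseq_ge k
  have hLpos : (0:ℝ) < Real.log (Real.log (nseq k)) := lt_of_lt_of_le (by positivity) hLL
  have hglog : gLogLog (nseq k) = ⌊(2:ℝ) ^ (nseq k) / Real.log (Real.log (nseq k))⌋₊ := by
    unfold gLogLog; rw [if_neg (by omega)]
  rw [hglog]
  calc (⌊(2:ℝ) ^ (nseq k) / Real.log (Real.log (nseq k))⌋₊ : ℝ)
      ≤ (2:ℝ) ^ (nseq k) / Real.log (Real.log (nseq k)) := Nat.floor_le (by positivity)
  _ ≤ 2 ^ (nseq k) / 2 ^ k := by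
      apply div_le_div_of_nonneg_left (by positivity) (by positivity) hLL

set_option maxHeartbeats 1000000 in
/-- No Martin-Löf random set is a `⌊2^n / log log n⌋`-change set. -/
theorem no_random_loglog_change_set (Z : ℕ → Bool) (hrand : MLRandom Z) :
    ¬ GChangeSet Z gLogLog := by
  rintro ⟨Zs, ⟨hZcomp, happrox⟩, hcount⟩
  set σ : ℕ → List Bool := sigmaFn Zs with hσ
  -- the test is computable
  have hσcomp : Computable σ := sigmaFn_computable hZcomp
  -- the auxiliary weight function on pairs
  set F : ℕ × ℕ → ℝ := fun p =>
    cond (testB Zs p.1 p.2) (((1:ℝ)/2) ^ (nseq p.1)) 0 with hF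
  have hF0 : ∀ p, 0 ≤ F p := by
    intro p
    have : F p = cond (testB Zs p.1 p.2) (((1:ℝ)/2) ^ (nseq p.1)) 0 := rfl
    rw [this]
    cases h : testB Zs p.1 p.2 <;> simp [h] <;> positivity
  -- for each k, the support of `fun s => F (k, s)` is finite
  have hvanish : ∀ k s, s ∉ insert 0 ((hcount (nseq k)).1.toFinset) → F (k, s) = 0 := by
    intro k s hs
    simp only [Finset.mem_insert, Set.Finite.mem_toFinset] at hs
    push_neg at hs
    obtain ⟨hs0, hsC⟩ := hs
    have h1 : 1 ≤ s := Nat.one_le_iff_ne_zero.2 hs0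
    have heq : restr (Zs s) (nseq k) = restr (Zs (s - 1)) (nseq k) := by
      by_contra hne
      exact hsC ⟨h1, hne⟩
    rw [hF]
    simp [testB, hs0, heq]
  have hinner : ∀ k, Summable fun s => F (k, s) := fun k =>
    summable_of_ne_finset_zero (hvanish k)
  have htsum_le : ∀ k, ∑' s, F (k, s) ≤ 2 * ((1:ℝ)/2) ^ k := by
    intro k
    rw [tsum_eq_sum (hvanish k)]
    have hterm : ∀ s ∈ insert 0 ((hcount (nseq k)).1.toFinset),
        F (k, s) ≤ ((1:ℝ)/2) ^ (nseq k) := by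
      intro s _
      have hFe : F (k, s) = cond (testB Zs k s) (((1:ℝ)/2) ^ (nseq k)) 0 := rfl
      rw [hFe]
      cases h : testB Zs k s <;> simp [h] <;> positivity
    have hcard : ((insert 0 ((hcount (nseq k)).1.toFinset)).card : ℝ)
        ≤ (gLogLog (nseq k) : ℝ) + 1 := by
      have h1 : (insert 0 ((hcount (nseq k)).1.toFinset)).card
          ≤ ((hcount (nseq k)).1.toFinset).card + 1 := Finset.card_insert_le _ _
      have h2 : ((hcount (nseq k)).1.toFinset).card = (changeStages Zs (nseq k)).ncard :=
        (Set.ncard_eq_toFinset_card _ (hcount (nseq k)).1).symm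
      have h3 := (hcount (nseq k)).2
      have : (insert 0 ((hcount (nseq k)).1.toFinset)).card ≤ gLogLog (nseq k) + 1 := by omega
      exact_mod_cast this
    calc ∑ s ∈ insert 0 ((hcount (nseq k)).1.toFinset), F (k, s)
        ≤ (insert 0 ((hcount (nseq k)).1.toFinset)).card • (((1:ℝ)/2) ^ (nseq k)) :=
          Finset.sum_le_card_nsmul _ _ _ hterm
    _ = ((insert 0 ((hcount (nseq k)).1.toFinset)).card : ℝ) * ((1:ℝ)/2) ^ (nseq k) := by
          rw [nsmul_eq_mul]
    _ ≤ ((gLogLog (nseq k) : ℝ) + 1) * ((1:ℝ)/2) ^ (nseq k) := by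
          apply mul_le_mul_of_nonneg_right hcard (by positivity)
    _ ≤ (2 ^ (nseq k) / 2 ^ k + 1) * ((1:ℝ)/2) ^ (nseq k) := by
          apply mul_le_mul_of_nonneg_right (by linarith [gLogLog_nseq_le k]) (by positivity)
    _ = ((1:ℝ)/2) ^ k + ((1:ℝ)/2) ^ (nseq k) := by
          rw [one_div_pow, one_div_pow]
          have h2k : ((2:ℝ) ^ k) ≠ 0 := by positivity
          have h2n : ((2:ℝ) ^ (nseq k)) ≠ 0 := by positivity
          field_simp
    _ ≤ ((1:ℝ)/2) ^ k + ((1:ℝ)/2) ^ k := by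
          have : ((1:ℝ)/2) ^ (nseq k) ≤ ((1:ℝ)/2) ^ k :=
            pow_le_pow_of_le_one (by norm_num) (by norm_num) (le_nseq k)
          linarith
    _ = 2 * ((1:ℝ)/2) ^ k := by ring
  have houter : Summable fun k => ∑' s, F (k, s) := by
    apply Summable.of_nonneg_of_le (fun k => tsum_nonneg fun s => hF0 (k, s)) htsum_le
    exact (summable_geometric_of_lt_one (by norm_num) (by norm_num)).mul_left 2
  have hFsum : Summable F := (summable_prod_of_nonneg hF0).2 ⟨hinner, houter⟩
  have hunpair_inj : Function.Injective Nat.unpair := by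
    intro a b h
    rw [← Nat.pair_unpair a, ← Nat.pair_unpair b, h]
  have hextra : Summable fun i => F (Nat.unpair i) := hFsum.comp_injective hunpair_inj
  -- summability of the weights of the test
  have hsum : Summable (fun i => ((1 : ℝ) / 2) ^ (σ i).length) := by
    have hgeo : Summable (fun i : ℕ => ((1:ℝ)/2) ^ (i + 1)) := by
      have := (summable_geometric_of_lt_one (show (0:ℝ) ≤ 1/2 by norm_num)
        (show (1:ℝ)/2 < 1 by norm_num)).mul_right ((1:ℝ)/2)
      exact this.congr fun i => (pow_succ _ _).symm
    have hbound : ∀ i, ((1:ℝ)/2) ^ (σ i).length ≤ F (Nat.unpair i) + ((1:ℝ)/2) ^ (i + 1) := by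
      intro i
      have hFe : F (Nat.unpair i)
          = cond (testB Zs i.unpair.1 i.unpair.2) (((1:ℝ)/2) ^ (nseq i.unpair.1)) 0 := rfl
      have hσe : σ i = cond (testB Zs i.unpair.1 i.unpair.2)
          (restr (Zs i.unpair.2) (nseq i.unpair.1)) (List.replicate (i + 1) true) := rfl
      rw [hFe, hσe]
      cases h : testB Zs i.unpair.1 i.unpair.2
      · simp only [cond_false, List.length_replicate, zero_add, le_refl]
      · simp only [cond_true, restr_length]
        have hge : (0:ℝ) ≤ ((1:ℝ)/2) ^ (i + 1) := pow_nonneg (by norm_num) _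
        linarith
    exact Summable.of_nonneg_of_le (fun i => pow_nonneg (by norm_num) _) hbound
      (hextra.add hgeo)
  have hfin := hrand σ hσcomp hsum
  -- For each k there is a "good" stage whose prefix is the true prefix of Z
  have hgood : ∀ k, ∃ s, testB Zs k s = true ∧ restr (Zs s) (nseq k) = restr Z (nseq k) := by
    intro k
    set m := nseq k with hm
    choose t ht using happrox
    set T := (Finset.range m).sup t with hTdef
    have hT : ∀ s, T ≤ s → restr (Zs s) m = restr Z m := by
      intro s hs
      unfold restr
      apply List.map_congr_left
      intro x hx
      have hxm : x < m := List.mem_range.1 hx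
      exact ht x s (le_trans (Finset.le_sup (Finset.mem_range.2 hxm)) hs)
    set C := (hcount m).1.toFinset with hC
    set G := insert 0 (C.filter (fun s => s ≤ T)) with hG
    have hne : G.Nonempty := ⟨0, Finset.mem_insert_self _ _⟩
    set s₀ := G.max' hne with hs₀
    have hsG : s₀ ∈ G := G.max'_mem hne
    have hsT : s₀ ≤ T := by
      rcases Finset.mem_insert.1 hsG with h | h
      · omega
      · exact (Finset.mem_filter.1 h).2
    have key : ∀ v, s₀ ≤ v → v ≤ T → restr (Zs v) m = restr (Zs s₀) m := by
      intro v hv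
      induction v, hv using Nat.le_induction with
      | base => intro _; rfl
      | succ v hv ih =>
        intro hvT
        have hstep : restr (Zs (v + 1)) m = restr (Zs v) m := by
          by_contra hne'
          have hmem : (v + 1) ∈ changeStages Zs m := by
            refine ⟨Nat.succ_le_succ (Nat.zero_le v), ?_⟩
            simpa using hne'
          have hinG : (v + 1) ∈ G :=
            Finset.mem_insert_of_mem (Finset.mem_filter.2
              ⟨(hcount m).1.mem_toFinset.2 hmem, hvT⟩)
          have := Finset.le_max' G _ hinG
          omega
        rw [hstep, ih (by omega)]
    have h1 : restr (Zs T) m = restr (Zs s₀) m := key T hsT le_rfl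
    have h2 : restr (Zs T) m = restr Z m := hT T le_rfl
    refine ⟨s₀, ?_, h1.symm.trans h2⟩
    rcases Finset.mem_insert.1 hsG with h | h
    · simp [testB, h]
    · have hmem : s₀ ∈ changeStages Zs m := (hcount m).1.mem_toFinset.1 (Finset.mem_filter.1 h).1
      unfold testB
      rw [Bool.or_eq_true]
      right
      simpa using hmem.2
  choose sfun hs1 hs2 using hgood
  have hinf : {i | InitSeg (σ i) Z}.Infinite := by
    apply Set.infinite_of_injective_forall_mem (f := fun k => Nat.pair k (sfun k))
    · intro a b h
      have := congrArg (fun x => x.unpair.1) h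
      simpa [Nat.unpair_pair] using this
    · intro k
      show InitSeg (σ (Nat.pair k (sfun k))) Z
      have hσval : σ (Nat.pair k (sfun k)) = restr Z (nseq k) := by
        rw [hσ]
        unfold sigmaFn
        rw [Nat.unpair_pair]
        simp only [hs1 k, cond_true]
        exact hs2 k
      rw [hσval]
      unfold InitSeg
      rw [restr_length]
  exact hinf hfin
end

section
/- If a Δ⁰₂ set A obeys a cost function c, then for every rational ε > 0, A has a computable approximation whose total cost is at most ε. -/
lemma stageCost_nonneg (c : ℕ → ℕ → ℚ) (hc0 : ∀ x s, 0 ≤ c x s)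
    (As : ℕ → ℕ → Bool) (s : ℕ) : 0 ≤ stageCost c As s := by
  unfold stageCost
  split_ifs with h1 h2
  exacts [le_rfl, hc0 _ _, le_rfl]

lemma stageCost_shift (c : ℕ → ℕ → ℚ) (hc0 : ∀ x s, 0 ≤ c x s)
    (hmono : ∀ x s t, s ≤ t → c x s ≤ c x t)
    (As : ℕ → ℕ → Bool) (t s : ℕ) :
    stageCost c (fun u x => As (u + t) x) s ≤ stageCost c As (s + t) := by
  rcases Nat.eq_zero_or_pos s with rfl | hs
  · have h0 : stageCost c (fun u x => As (u + t) x) 0 = 0 := by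
      unfold stageCost; simp
    rw [h0]
    simpa using stageCost_nonneg c hc0 As t
  · have hs0 : s ≠ 0 := hs.ne'
    have hst0 : s + t ≠ 0 := by omega
    have hsub : s - 1 + t = s + t - 1 := by omega
    unfold stageCost
    rw [if_neg hs0, if_neg hst0]
    have hiff : ∀ x, ((fun u x => As (u + t) x) s x ≠ (fun u x => As (u + t) x) (s - 1) x)
        ↔ (As (s + t) x ≠ As (s + t - 1) x) := by
      intro x; simp only [hsub]
    by_cases h : ∃ x, As (s + t) x ≠ As (s + t - 1) x
    · have h' : ∃ x, (fun u x => As (u + t) x) s x ≠ (fun u x => As (u + t) x) (s - 1) x := by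
        obtain ⟨x, hx⟩ := h; exact ⟨x, (hiff x).mpr hx⟩
      rw [dif_pos h', dif_pos h]
      have hfind : Nat.find h' = Nat.find h := by
        apply le_antisymm
        · exact Nat.find_le ((hiff _).mpr (Nat.find_spec h))
        · exact Nat.find_le ((hiff _).mp (Nat.find_spec h'))
      rw [hfind]
      exact hmono _ _ _ (Nat.le_add_right s t)
    · have h' : ¬ ∃ x, (fun u x => As (u + t) x) s x ≠ (fun u x => As (u + t) x) (s - 1) x := by
        intro ⟨x, hx⟩; exact h ⟨x, (hiff x).mp hx⟩
      rw [dif_neg h', dif_neg h]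

/-- If a Δ⁰₂ set obeys a cost function, then for every rational `ε > 0`
it has a computable approximation with total cost at most `ε`. -/
theorem obeys_small_cost (c : ℕ → ℕ → ℚ) (hc : CostFunction c)
    (A : ℕ → Bool) (hA : Delta02 A) (hobeys : Obeys A c) :
    ∀ ε : ℚ, 0 < ε →
      ∃ As, CompApprox As A ∧ ∀ F : Finset ℕ, ∑ s ∈ F, stageCost c As s ≤ ε := by
  intro ε hε
  obtain ⟨hccomp, hc0, hcmono, _⟩ := hc
  obtain ⟨As, ⟨hAscomp, hAsapprox⟩, B, hB⟩ := hobeys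
  -- the stage costs, as a real-valued function
  set f : ℕ → ℝ := fun s => ((stageCost c As s : ℚ) : ℝ) with hf
  have hfnonneg : ∀ s, 0 ≤ f s := fun s => by
    simpa [hf] using (Rat.cast_nonneg (K := ℝ)).mpr (stageCost_nonneg c hc0 As s)
  have hsum : Summable f := by
    apply summable_of_sum_le (c := (B : ℝ)) hfnonneg
    intro u
    have := hB u
    calc ∑ s ∈ u, f s = ((∑ s ∈ u, stageCost c As s : ℚ) : ℝ) := by
          simp [hf, Rat.cast_sum]
      _ ≤ (B : ℝ) := by exact_mod_cast this
  have hvan := summable_iff_vanishing.mp hsum (Set.Ioo (-(ε : ℝ)) (ε : ℝ))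
    (Ioo_mem_nhds (neg_lt_zero.mpr (by exact_mod_cast hε)) (by exact_mod_cast hε))
  obtain ⟨s₀, hs₀⟩ := hvan
  set t : ℕ := s₀.sup id + 1 with ht
  refine ⟨fun u x => As (u + t) x, ⟨?_, ?_⟩, ?_⟩
  · -- computability of the shifted approximation
    exact hAscomp.comp
      ((Primrec.nat_add.comp Primrec.fst (Primrec.const t)).to_comp)
      Computable.snd
  · -- it still approximates A
    intro x
    obtain ⟨t₀, ht₀⟩ := hAsapprox x
    exact ⟨t₀, fun s hs => ht₀ (s + t) (le_trans hs (Nat.le_add_right s t))⟩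
  · -- the total cost is at most ε
    intro F
    have hstep : ∑ s ∈ F, stageCost c (fun u x => As (u + t) x) s
        ≤ ∑ s ∈ F, stageCost c As (s + t) :=
      Finset.sum_le_sum fun s _ => stageCost_shift c hc0 hcmono As t s
    have himg : ∑ s ∈ F, stageCost c As (s + t)
        = ∑ u ∈ F.image (· + t), stageCost c As u := by
      rw [Finset.sum_image]
      intro a _ b _ hab
      beta_reduce at hab
      omega
    have hdisj : Disjoint (F.image (· + t)) s₀ := by
      rw [Finset.disjoint_left]
      intro u hu hus₀
      obtain ⟨s, _, rfl⟩ := Finset.mem_image.mp hu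
      have hle : s + t ≤ s₀.sup id := Finset.le_sup (f := id) hus₀
      omega
    have hmem := hs₀ _ hdisj
    have hsmall : ((∑ u ∈ F.image (· + t), stageCost c As u : ℚ) : ℝ) < (ε : ℝ) := by
      have : ∑ u ∈ F.image (· + t), f u < (ε : ℝ) := hmem.2
      simpa [hf, Rat.cast_sum] using this
    have hq : ∑ u ∈ F.image (· + t), stageCost c As u ≤ ε :=
      le_of_lt (by exact_mod_cast hsmall)
    calc ∑ s ∈ F, stageCost c (fun u x => As (u + t) x) s
        ≤ ∑ s ∈ F, stageCost c As (s + t) := hstep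
      _ = ∑ u ∈ F.image (· + t), stageCost c As u := himg
      _ ≤ ε := hq
end

section
/- If c is a cost function with c(x,s) ≥ 2^{-x} for all x and s, then no Martin-Löf random Δ⁰₂ set obeys c. -/
namespace RNC

@[simp] theorem restr_length (Z : ℕ → Bool) (n : ℕ) : (restr Z n).length = n := by
  simp [restr]

theorem restr_succ (Z : ℕ → Bool) (n : ℕ) : restr Z (n + 1) = restr Z n ++ [Z n] := by
  simp [restr, List.range_succ]

def restrAux (Zs : ℕ → ℕ → Bool) (s n : ℕ) : List Bool :=
  Nat.rec (motive := fun _ => List Bool) [] (fun y IH => IH ++ [Zs s y]) n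

theorem restrAux_eq (Zs : ℕ → ℕ → Bool) (s n : ℕ) : restrAux Zs s n = restr (Zs s) n := by
  induction n with
  | zero => simp [restrAux, restr]
  | succ n ih => simp [restrAux, restr_succ] at *; simp [ih]

theorem restrC {Zs : ℕ → ℕ → Bool} (h : Computable₂ Zs) :
    Computable fun p : ℕ × ℕ => restr (Zs p.1) p.2 := by
  have : Computable fun p : ℕ × ℕ => restrAux Zs p.1 p.2 := by
    have := Computable.nat_rec (f := fun p : ℕ × ℕ => p.2)
      (g := fun _ : ℕ × ℕ => ([] : List Bool))
      (h := fun (p : ℕ × ℕ) (q : ℕ × List Bool) => q.2 ++ [Zs p.1 q.1])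
      Computable.snd (Computable.const [])
      ((Computable.list_concat.comp (Computable.snd.comp Computable.snd)
        (h.comp (Computable.fst.comp Computable.fst) (Computable.fst.comp Computable.snd))).to₂)
    exact this
  exact this.of_eq fun p => restrAux_eq Zs p.1 p.2

theorem not_MLRandom_of_computable {Z : ℕ → Bool} (hc : Computable Z) : ¬ MLRandom Z := by
  intro hML
  have h2 : Computable₂ (fun (_ : ℕ) x => Z x) := hc.comp Computable.snd
  have hσ : Computable fun i => restr Z i :=
    (restrC h2).comp ((Computable.const 0).pair Computable.id)
  have hsum : Summable fun i => ((1 : ℝ) / 2) ^ (restr Z i).length := by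
    simpa [restr_length] using summable_geometric_two
  have hfin := hML _ hσ hsum
  have huniv : {i | InitSeg (restr Z i) Z} = Set.univ := by
    ext i; simp [InitSeg, restr_length]
  rw [huniv] at hfin
  exact Set.infinite_univ hfin

def agreeB (Zs : ℕ → ℕ → Bool) (s n : ℕ) : Bool :=
  Nat.rec (motive := fun _ => Bool) true
    (fun y IH => cond IH (Zs s y == Zs (s - 1) y) false) n

theorem agreeB_succ (Zs : ℕ → ℕ → Bool) (s n : ℕ) :
    agreeB Zs s (n + 1) = cond (agreeB Zs s n) (Zs s n == Zs (s - 1) n) false := rfl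

theorem agreeB_iff (Zs : ℕ → ℕ → Bool) (s n : ℕ) :
    agreeB Zs s n = true ↔ ∀ i, i < n → Zs s i = Zs (s - 1) i := by
  induction n with
  | zero => simp [agreeB]
  | succ n ih =>
    rw [agreeB_succ]
    constructor
    · intro h
      have hc : agreeB Zs s n = true := by
        cases h' : agreeB Zs s n
        · rw [h'] at h; simp at h
        · rfl
      rw [hc] at h; simp at h
      intro i hi
      rcases Nat.lt_succ_iff_lt_or_eq.1 hi with h' | h'
      · exact ih.1 hc i h'
      · subst h'; exact h
    · intro h
      have hc : agreeB Zs s n = true := ih.2 fun i hi => h i (hi.trans (Nat.lt_succ_self n))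
      rw [hc]; simp
      exact h n (Nat.lt_succ_self n)

theorem agreeC {Zs : ℕ → ℕ → Bool} (h : Computable₂ Zs) :
    Computable fun p : ℕ × ℕ => agreeB Zs p.1 p.2 := by
  have hbeq : Computable₂ fun a b : Bool => a == b := Primrec.beq.to_comp
  exact Computable.nat_rec (f := fun p : ℕ × ℕ => p.2)
    (g := fun _ : ℕ × ℕ => true)
    (h := fun (p : ℕ × ℕ) (q : ℕ × Bool) => cond q.2 (Zs p.1 q.1 == Zs (p.1 - 1) q.1) false)
    Computable.snd (Computable.const true)
    ((Computable.cond (Computable.snd.comp Computable.snd)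
      (hbeq.comp (h.comp (Computable.fst.comp Computable.fst) (Computable.fst.comp Computable.snd))
        (h.comp (Primrec.pred.to_comp.comp (Computable.fst.comp Computable.fst))
          (Computable.fst.comp Computable.snd)))
      (Computable.const false)).to₂)

def chB (Zs : ℕ → ℕ → Bool) (s n : ℕ) : Bool :=
  cond (s == 0) false (cond (Zs s n == Zs (s - 1) n) false (agreeB Zs s n))

theorem chB_iff (Zs : ℕ → ℕ → Bool) (s n : ℕ) :
    chB Zs s n = true ↔
      1 ≤ s ∧ Zs s n ≠ Zs (s - 1) n ∧ ∀ i, i < n → Zs s i = Zs (s - 1) i := by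
  rcases Nat.eq_zero_or_pos s with h | h
  · subst h; simp [chB]
  · have hs : (s == 0) = false := by simp [Nat.pos_iff_ne_zero.1 h]
    by_cases he : Zs s n = Zs (s - 1) n
    · simp [chB, hs, he]
    · have hbe : (Zs s n == Zs (s - 1) n) = false := by simp [he]
      have hb : chB Zs s n = agreeB Zs s n := by simp [chB, hs, hbe]
      rw [hb, agreeB_iff]
      exact ⟨fun ha => ⟨h, he, ha⟩, fun ha => ha.2.2⟩

theorem chB_unique {Zs : ℕ → ℕ → Bool} {s n n' : ℕ}
    (h : chB Zs s n = true) (h' : chB Zs s n' = true) : n = n' := by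
  rw [chB_iff] at h h'
  by_contra hne
  rcases Nat.lt_or_ge n n' with hl | hl
  · exact h.2.1 (h'.2.2 n hl)
  · exact h'.2.1 (h.2.2 n' (by omega))

theorem chC {Zs : ℕ → ℕ → Bool} (h : Computable₂ Zs) :
    Computable fun p : ℕ × ℕ => chB Zs p.1 p.2 := by
  have hbeq : Computable₂ fun a b : Bool => a == b := Primrec.beq.to_comp
  have hbeqN : Computable₂ fun a b : ℕ => a == b := Primrec.beq.to_comp
  exact Computable.cond (hbeqN.comp Computable.fst (Computable.const 0))
    (Computable.const false)
    (Computable.cond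
      (hbeq.comp (h.comp Computable.fst Computable.snd)
        (h.comp (Primrec.pred.to_comp.comp Computable.fst) Computable.snd))
      (Computable.const false) (agreeC h))

def sigma (Zs : ℕ → ℕ → Bool) (i : ℕ) : List Bool :=
  cond (chB Zs i.unpair.1 i.unpair.2)
    (restr (Zs i.unpair.1) (i.unpair.2 + 1))
    (restr (Zs 0) (i + 2))

theorem sigmaC {Zs : ℕ → ℕ → Bool} (h : Computable₂ Zs) : Computable (sigma Zs) := by
  have hu : Computable Nat.unpair := Primrec.unpair.to_comp
  have hu1 : Computable fun i : ℕ => i.unpair.1 := Computable.fst.comp hu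
  have hu2 : Computable fun i : ℕ => i.unpair.2 := Computable.snd.comp hu
  exact Computable.cond ((chC h).comp (hu1.pair hu2))
    ((restrC h).comp (hu1.pair (Computable.succ.comp hu2)))
    ((restrC h).comp ((Computable.const 0).pair
      (Computable.succ.comp (Computable.succ.comp Computable.id))))

end RNC

/-- If `c(x,s) ≥ 2^{-x}` for all `x, s`, then no ML-random Δ⁰₂ set
obeys `c`. -/
theorem random_obeys_no_cost (c : ℕ → ℕ → ℚ) (hc : CostFunction c)
    (hbig : ∀ x s, ((1 : ℚ) / 2) ^ x ≤ c x s) :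
    ∀ Z : ℕ → Bool, MLRandom Z → Delta02 Z → ¬ Obeys Z c := by
  classical
  intro Z hML _ hObeys
  obtain ⟨As, ⟨hAc, hAa⟩, B, hB⟩ := hObeys
  obtain ⟨hccomp, hcnn, hcmono, hcanti⟩ := hc
  -- the cost at a stage where a change occurs at least position ≤ n is at least (1/2)^(n+1)
  have hstagebound : ∀ s : ℕ, s ≠ 0 → ∀ n : ℕ, ∀ hex : ∃ y, As s y ≠ As (s - 1) y,
      Nat.find hex ≤ n → ((1 : ℚ) / 2) ^ (n + 1) ≤ stageCost c As s := by
    intro s hs0 n hex hfl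
    have hval : stageCost c As s = c (Nat.find hex) s := by
      rw [stageCost, if_neg hs0, dif_pos hex]
    rw [hval]
    calc ((1 : ℚ) / 2) ^ (n + 1) ≤ ((1 : ℚ) / 2) ^ n :=
          pow_le_pow_of_le_one (by norm_num) (by norm_num) (by omega)
      _ ≤ c n s := hbig n s
      _ ≤ c (Nat.find hex) s := hcanti _ _ _ hfl
  have hcostnn : ∀ s, 0 ≤ stageCost c As s := by
    intro s
    rw [stageCost]
    split
    · exact le_refl 0
    · split
      · exact hcnn _ _
      · exact le_refl 0
  -- Claim 1: changes occur beyond any stage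
  have hchange : ∀ T, ∃ s, T < s ∧ ∃ x, As s x ≠ As (s - 1) x := by
    intro T
    by_contra h
    push_neg at h
    have hstab : ∀ s, T ≤ s → ∀ x, As s x = As T x := by
      intro s hs
      induction s, hs using Nat.le_induction with
      | base => intro x; rfl
      | succ s hs ih =>
        intro x
        have := h (s + 1) (by omega) x
        simpa using this.trans (ih x)
    have hZ : ∀ x, Z x = As T x := by
      intro x
      obtain ⟨t, ht⟩ := hAa x
      rw [← ht (max t T) (le_max_left _ _), hstab _ (le_max_right _ _) x]
    have hZc : Computable Z :=
      ((hAc.comp (Computable.const T) Computable.id).of_eq fun x => (hZ x).symm)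
    exact RNC.not_MLRandom_of_computable hZc hML
  -- Claim 2: for each n, only finitely many stages change at a position ≤ n
  have hD : ∀ n : ℕ, {s | 1 ≤ s ∧ ∃ x ≤ n, As s x ≠ As (s - 1) x}.Finite := by
    intro n
    by_contra hfin
    have hinf : {s | 1 ≤ s ∧ ∃ x ≤ n, As s x ≠ As (s - 1) x}.Infinite := hfin
    obtain ⟨N, hN⟩ := exists_nat_gt (B * 2 ^ (n + 1))
    obtain ⟨t, hts, htf, htc⟩ := hinf.exists_subset_ncard_eq N
    have hcard : htf.toFinset.card = N := by
      rwa [Set.ncard_eq_toFinset_card t htf] at htc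
    have hlow : ∀ s ∈ htf.toFinset, ((1 : ℚ) / 2) ^ (n + 1) ≤ stageCost c As s := by
      intro s hs
      obtain ⟨hs1, x, hxn, hx⟩ := hts (htf.mem_toFinset.1 hs)
      have hex : ∃ y, As s y ≠ As (s - 1) y := ⟨x, hx⟩
      exact hstagebound s (by omega) n hex (le_trans (Nat.find_min' hex hx) hxn)
    have hsum : (N : ℚ) * ((1 : ℚ) / 2) ^ (n + 1) ≤ ∑ s ∈ htf.toFinset, stageCost c As s := by
      have := Finset.card_nsmul_le_sum htf.toFinset (stageCost c As) (((1 : ℚ) / 2) ^ (n + 1)) hlow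
      rwa [hcard, nsmul_eq_mul] at this
    have hle : (N : ℚ) * ((1 : ℚ) / 2) ^ (n + 1) ≤ B := le_trans hsum (hB htf.toFinset)
    rw [div_pow, one_pow] at hle
    have h2pos : (0 : ℚ) < 2 ^ (n + 1) := by positivity
    have h3 := mul_le_mul_of_nonneg_right hle h2pos.le
    have h4 : (N : ℚ) * (1 / 2 ^ (n + 1)) * 2 ^ (n + 1) = N := by field_simp
    rw [h4] at h3
    linarith
  -- Claim 3: infinitely many indices give true initial segments
  have hkey : ∀ N, ∃ i, N < i ∧ InitSeg (RNC.sigma As i) Z := by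
    intro N
    obtain ⟨s₀, hs₀N, x₀, hx₀⟩ := hchange N
    have hfinD := hD x₀
    have hs₀D : s₀ ∈ {s | 1 ≤ s ∧ ∃ x ≤ x₀, As s x ≠ As (s - 1) x} :=
      ⟨by omega, x₀, le_refl _, hx₀⟩
    have hFne : hfinD.toFinset.Nonempty := ⟨s₀, hfinD.mem_toFinset.2 hs₀D⟩
    set s1 := hfinD.toFinset.max' hFne with hs1def
    have hs1D := hfinD.mem_toFinset.1 (hfinD.toFinset.max'_mem hFne)
    have hmax : ∀ s, s ∈ {s | 1 ≤ s ∧ ∃ x ≤ x₀, As s x ≠ As (s - 1) x} → s ≤ s1 :=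
      fun s hs => hfinD.toFinset.le_max' s (hfinD.mem_toFinset.2 hs)
    obtain ⟨hs11, x1, hx1n, hx1⟩ := hs1D
    have hex : ∃ y, As s1 y ≠ As (s1 - 1) y := ⟨x1, hx1⟩
    have hnx : Nat.find hex ≤ x₀ := le_trans (Nat.find_min' hex hx1) hx1n
    have hstab : ∀ s, s1 ≤ s → ∀ x, x ≤ x₀ → As s x = As s1 x := by
      intro s hs
      induction s, hs using Nat.le_induction with
      | base => intro x _; rfl
      | succ s hs ih =>
        intro x hx
        by_cases hch : As (s + 1) x = As s x
        · rw [hch]; exact ih x hx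
        · exfalso
          have hmem : (s + 1) ∈ {s | 1 ≤ s ∧ ∃ x ≤ x₀, As s x ≠ As (s - 1) x} :=
            ⟨by omega, x, hx, by simpa using hch⟩
          have := hmax _ hmem
          omega
    have hZag : ∀ x, x ≤ x₀ → Z x = As s1 x := by
      intro x hx
      obtain ⟨t, ht⟩ := hAa x
      rw [← ht (max t s1) (le_max_left _ _), hstab _ (le_max_right _ _) x hx]
    refine ⟨Nat.pair s1 (Nat.find hex), ?_, ?_⟩
    · have h1 : s1 ≤ Nat.pair s1 (Nat.find hex) := Nat.left_le_pair _ _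
      have h2 : s₀ ≤ s1 := hmax s₀ hs₀D
      omega
    · have hch : RNC.chB As s1 (Nat.find hex) = true := by
        rw [RNC.chB_iff]
        exact ⟨hs11, Nat.find_spec hex, fun i hi => by
          have := Nat.find_min hex hi; simpa using this⟩
      have hσ : RNC.sigma As (Nat.pair s1 (Nat.find hex)) =
          restr (As s1) (Nat.find hex + 1) := by
        rw [RNC.sigma, Nat.unpair_pair]
        simp [hch]
      rw [InitSeg, hσ, RNC.restr_length]
      unfold restr
      refine (List.map_congr_left fun a ha => ?_).symm
      rw [List.mem_range] at ha
      exact hZag a (by omega)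
  have hinf : {i | InitSeg (RNC.sigma As i) Z}.Infinite := by
    intro hfin
    obtain ⟨b, hb2⟩ := hfin.bddAbove
    obtain ⟨i, hib, hi⟩ := hkey b
    exact absurd (hb2 hi) (by omega)
  -- Summability of the test
  set g : ℕ → ℝ := fun i =>
    if RNC.chB As i.unpair.1 i.unpair.2 = true then ((1 : ℝ) / 2) ^ (i.unpair.2 + 1) else 0
    with hgdef
  have hgnn : ∀ i, 0 ≤ g i := by
    intro i; rw [hgdef]; dsimp only; split <;> positivity
  have hgsum : ∀ N, ∑ i ∈ Finset.range N, g i ≤ (B : ℝ) := by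
    intro N
    rw [hgdef]
    rw [← Finset.sum_filter]
    set F := (Finset.range N).filter (fun i => RNC.chB As i.unpair.1 i.unpair.2 = true) with hF
    have hmemF : ∀ i ∈ F, RNC.chB As i.unpair.1 i.unpair.2 = true := by
      intro i hi
      exact (Finset.mem_filter.1 hi).2
    have hterm : ∀ i ∈ F, ((1 : ℝ) / 2) ^ (i.unpair.2 + 1) ≤
        ((stageCost c As i.unpair.1 : ℚ) : ℝ) := by
      intro i hi
      have hch := hmemF i hi
      rw [RNC.chB_iff] at hch
      obtain ⟨hs1, hdiff, hleast⟩ := hch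
      have hex : ∃ y, As i.unpair.1 y ≠ As (i.unpair.1 - 1) y := ⟨_, hdiff⟩
      have hfl : Nat.find hex ≤ i.unpair.2 := Nat.find_min' hex hdiff
      have := hstagebound i.unpair.1 (by omega) i.unpair.2 hex hfl
      calc ((1 : ℝ) / 2) ^ (i.unpair.2 + 1)
          = ((((1 : ℚ) / 2) ^ (i.unpair.2 + 1) : ℚ) : ℝ) := by push_cast; ring
        _ ≤ ((stageCost c As i.unpair.1 : ℚ) : ℝ) := by exact_mod_cast this
    calc ∑ i ∈ F, ((1 : ℝ) / 2) ^ (i.unpair.2 + 1)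
        ≤ ∑ i ∈ F, ((stageCost c As i.unpair.1 : ℚ) : ℝ) := Finset.sum_le_sum hterm
      _ = ((∑ i ∈ F, stageCost c As i.unpair.1 : ℚ) : ℝ) := by push_cast; ring
      _ = ((∑ s ∈ F.image (fun i => i.unpair.1), stageCost c As s : ℚ) : ℝ) := by
          rw [Finset.sum_image]
          intro i hi j hj hij
          have hchi := hmemF i hi
          have hchj := hmemF j hj
          simp only at hij
          rw [hij] at hchi
          have := RNC.chB_unique hchi hchj
          have h1 : Nat.pair i.unpair.1 i.unpair.2 = i := Nat.pair_unpair i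
          have h2 : Nat.pair j.unpair.1 j.unpair.2 = j := Nat.pair_unpair j
          rw [← h1, ← h2, hij, this]
      _ ≤ (B : ℝ) := by exact_mod_cast hB _
  have hg : Summable g := summable_of_sum_range_le hgnn hgsum
  have hdummy : Summable fun i : ℕ => ((1 : ℝ) / 2) ^ (i + 2) := by
    refine (summable_geometric_two.mul_right (((1 : ℝ) / 2) ^ 2)).congr fun i => ?_
    rw [← pow_add]
  have hsum : Summable fun i => ((1 : ℝ) / 2) ^ ((RNC.sigma As i).length) := by
    refine Summable.of_nonneg_of_le (fun i => by positivity) ?_ (hdummy.add hg)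
    intro i
    by_cases hch : RNC.chB As i.unpair.1 i.unpair.2 = true
    · have hlen : (RNC.sigma As i).length = i.unpair.2 + 1 := by
        rw [RNC.sigma, hch]; simp
      rw [hlen]
      have : g i = ((1 : ℝ) / 2) ^ (i.unpair.2 + 1) := by rw [hgdef]; simp [hch]
      rw [this]
      exact le_add_of_nonneg_left (by positivity)
    · have hch' : RNC.chB As i.unpair.1 i.unpair.2 = false := by
        simpa using hch
      have hlen : (RNC.sigma As i).length = i + 2 := by
        rw [RNC.sigma, hch']; simp
      rw [hlen]
      have : g i = 0 := by rw [hgdef]; simp [hch']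
      rw [this]
      simp
  have hfin := hML (RNC.sigma As) (RNC.sigmaC hAc) hsum
  exact hinf hfin
end
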